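/- Let g ∈ ℝ with |g| < 2 and choose k > 2/(2 − |g|). Define W(p, v) = |p| + k|v| on ℝ². Then for any essentially bounded measurable functions p, v : [−1, 0) → ℝ and any d ∈ [−1, 1], the quantity |d·∫_{−1}^{0} v(s) ds + g·d·∫_{−1}^{0} (1+s) p(s) ds| is bounded by λ · ess sup_{−1 ≤ s < 0} W(p(s), v(s)), where λ = |g|/2 + 1/k < 1. -/

import Mathlib

open MeasureTheory

theorem stmt5 (g k : ℝ) (hg : |g| < 2) (hk : 2 / (2 - |g|) < k)
    (p v : ℝ → ℝ) (hp : Measurable p) (hv : Measurable v)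
    (hpb : ∃ C, ∀ s, |p s| ≤ C) (hvb : ∃ C, ∀ s, |v s| ≤ C)
    (d : ℝ) (hd : d ∈ Set.Icc (-1 : ℝ) 1) :
    |d * (∫ s in (-1:ℝ)..0, v s) + g * d * (∫ s in (-1:ℝ)..0, (1 + s) * p s)|
      ≤ (|g| / 2 + 1 / k) *
        essSup (fun s => |p s| + k * |v s|) (volume.restrict (Set.Ico (-1 : ℝ) 0))
    ∧ |g| / 2 + 1 / k < 1 := by
  obtain ⟨Cp, hCp⟩ := hpb
  obtain ⟨Cv, hCv⟩ := hvb
  have hg2 : (0:ℝ) < 2 - |g| := by linarith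
  have hk0 : (0:ℝ) < k := lt_trans (div_pos two_pos hg2) hk
  have hlam : |g| / 2 + 1 / k < 1 := by
    rw [div_lt_iff₀ hg2] at hk
    rw [div_add_div _ _ (by norm_num) (ne_of_gt hk0), div_lt_one (by positivity)]
    nlinarith
  refine ⟨?_, hlam⟩
  set μ := volume.restrict (Set.Ico (-1:ℝ) 0) with hμ
  set M := essSup (fun s => |p s| + k * |v s|) μ with hM
  have hbdd : Filter.IsBoundedUnder (· ≤ ·) (ae μ) (fun s => |p s| + k * |v s|) := by
    refine Filter.isBoundedUnder_of ⟨Cp + k * Cv, fun s => ?_⟩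
    have h1 : k * |v s| ≤ k * Cv := mul_le_mul_of_nonneg_left (hCv s) hk0.le
    have h2 := hCp s
    show |p s| + k * |v s| ≤ Cp + k * Cv
    linarith
  have hμne : μ ≠ 0 := by
    rw [hμ]
    simp only [ne_eq, Measure.restrict_eq_zero]
    rw [Real.volume_Ico]
    norm_num
  have hae : ∀ᵐ s ∂μ, |p s| + k * |v s| ≤ M := ae_le_essSup hbdd
  have hM0 : 0 ≤ M := by
    have : (ae μ).NeBot := ae_neBot.mpr hμne
    obtain ⟨s, hs⟩ := hae.exists
    have : 0 ≤ |p s| + k * |v s| := by positivity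
    linarith
  -- transfer to Ioc
  have hres : volume.restrict (Set.Ico (-1:ℝ) 0) = volume.restrict (Set.Ioc (-1:ℝ) 0) :=
    Measure.restrict_congr_set MeasureTheory.Ico_ae_eq_Ioc
  have hae' : ∀ᵐ s ∂(volume.restrict (Set.uIoc (-1:ℝ) 0)), |p s| + k * |v s| ≤ M := by
    rw [Set.uIoc_of_le (by norm_num : (-1:ℝ) ≤ 0), ← hres]
    exact hae
  have hvle : ∀ᵐ s ∂(volume.restrict (Set.uIoc (-1:ℝ) 0)), ‖v s‖ ≤ M / k := by
    filter_upwards [hae'] with s hs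
    rw [Real.norm_eq_abs, le_div_iff₀ hk0]
    have := abs_nonneg (p s)
    nlinarith
  have hple : ∀ᵐ s ∂(volume.restrict (Set.uIoc (-1:ℝ) 0)), ‖(1 + s) * p s‖ ≤ (1 + s) * M := by
    rw [Set.uIoc_of_le (by norm_num : (-1:ℝ) ≤ 0)]
    rw [ae_restrict_iff' measurableSet_Ioc]
    rw [Set.uIoc_of_le (by norm_num : (-1:ℝ) ≤ 0), ae_restrict_iff' measurableSet_Ioc] at hae'
    filter_upwards [hae'] with s hs hsm
    have h1 : 0 ≤ 1 + s := by have := hsm.1; linarith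
    have hk' : 0 ≤ k * |v s| := by positivity
    rw [Real.norm_eq_abs, abs_mul, abs_of_nonneg h1]
    have : |p s| ≤ M := by linarith [hs hsm]
    nlinarith
  have hI1 : |∫ s in (-1:ℝ)..0, v s| ≤ M / k := by
    have := intervalIntegral.norm_integral_le_abs_of_norm_le (f := v) (g := fun _ => M / k)
      hvle (intervalIntegrable_const)
    rw [intervalIntegral.integral_const] at this
    simp at this
    calc |∫ s in (-1:ℝ)..0, v s| ≤ |M / k| := by simpa using this
    _ = M / k := abs_of_nonneg (by positivity)
  have hI2 : |∫ s in (-1:ℝ)..0, (1 + s) * p s| ≤ M / 2 := by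
    have hint : IntervalIntegrable (fun s => (1 + s) * M) volume (-1) 0 :=
      (Continuous.intervalIntegrable (by continuity) _ _)
    have := intervalIntegral.norm_integral_le_abs_of_norm_le (f := fun s => (1 + s) * p s)
      (g := fun s => (1 + s) * M) hple hint
    have hval : (∫ s in (-1:ℝ)..0, (1 + s) * M) = M / 2 := by
      rw [intervalIntegral.integral_mul_const, intervalIntegral.integral_add
        intervalIntegrable_const intervalIntegral.intervalIntegrable_id,
        intervalIntegral.integral_const, _root_.integral_id]
      norm_num; ring
    rw [hval, abs_of_nonneg (by positivity)] at this
    simpa using this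
  have hd1 : |d| ≤ 1 := abs_le.mpr hd
  calc |d * (∫ s in (-1:ℝ)..0, v s) + g * d * (∫ s in (-1:ℝ)..0, (1 + s) * p s)|
      ≤ |d * (∫ s in (-1:ℝ)..0, v s)| + |g * d * (∫ s in (-1:ℝ)..0, (1 + s) * p s)| :=
        abs_add_le _ _
    _ ≤ M / k + |g| * (M / 2) := by
        rw [abs_mul, abs_mul, abs_mul]
        have h1 : |d| * |∫ s in (-1:ℝ)..0, v s| ≤ 1 * (M / k) :=
          mul_le_mul hd1 hI1 (abs_nonneg _) one_pos.le
        have h2 : |g| * |d| * |∫ s in (-1:ℝ)..0, (1 + s) * p s| ≤ |g| * 1 * (M / 2) := by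
          apply mul_le_mul _ hI2 (abs_nonneg _) (by positivity)
          exact mul_le_mul_of_nonneg_left hd1 (abs_nonneg _)
        linarith
    _ = (|g| / 2 + 1 / k) * M := by field_simp; ring
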